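/- Let 1 ≤ i < j ≤ k. If r_{i,j} = 1, then there exists X ∈ h(0,0,C) such that p_{i,j}(X) is the d_i × d_j matrix whose (1, d_j)-entry is 1 and all other entries are 0. If r_{i,j} = 2, then there exists X ∈ h(0,0,C) such that p_{i,j}(X) has (1, d_j − 1)-entry equal to 1, (2, d_j)-entry equal to 1, and all other entries 0 except possibly the (1, d_j)-entry. -/

import Mathlib

open scoped Classical

noncomputable section

namespace Paper

variable {F : Type*}

attribute [local instance] LieRing.ofAssociativeRing

/-- Offset (starting global index) of the `i`-th block. -/
def off {k : ℕ} (dv : Fin k → ℕ) (i : Fin k) : ℕ := ∑ t ∈ Finset.Iio i, dv t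

/-- Total size `d = d₁ + ⋯ + d_k`. -/
def dtot {k : ℕ} (dv : Fin k → ℕ) : ℕ := ∑ t, dv t

theorem off_add_lt {k : ℕ} (dv : Fin k → ℕ) (i : Fin k) (r : Fin (dv i)) :
    off dv i + (r : ℕ) < dtot dv := by
  have h1 : off dv i + dv i ≤ dtot dv := by
    have h : off dv i + dv i = ∑ t ∈ insert i (Finset.Iio i), dv t := by
      rw [Finset.sum_insert (by simp), add_comm]
      rfl
    rw [h]
    exact Finset.sum_le_sum_of_subset (Finset.subset_univ _)
  have := r.isLt
  omega

/-- The global index of the `r`-th row/column of the `i`-th block. -/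
def emb {k : ℕ} (dv : Fin k → ℕ) (i : Fin k) (r : Fin (dv i)) : Fin (dtot dv) :=
  ⟨off dv i + r, off_add_lt dv i r⟩

/-- The projection `p_{i,j}` onto the `(i,j)`-block. -/
def blk {k : ℕ} (dv : Fin k → ℕ) (i j : Fin k)
    (A : Matrix (Fin (dtot dv)) (Fin (dtot dv)) F) :
    Matrix (Fin (dv i)) (Fin (dv j)) F :=
  Matrix.of fun r s => A (emb dv i r) (emb dv j s)

/-- The `p × p` upper triangular Jordan block `J^p(α)`. -/
def Jord [Field F] (p : ℕ) (α : F) : Matrix (Fin p) (Fin p) F :=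
  Matrix.of fun a b =>
    if (b : ℕ) = (a : ℕ) then α else if (b : ℕ) = (a : ℕ) + 1 then 1 else 0

/-- The matrix whose `(i,j)` block is `M` and all other blocks vanish. -/
def embMat [Field F] {k : ℕ} (dv : Fin k → ℕ) (i j : Fin k)
    (M : Matrix (Fin (dv i)) (Fin (dv j)) F) :
    Matrix (Fin (dtot dv)) (Fin (dtot dv)) F :=
  Matrix.of fun x y => ∑ r, ∑ s, if x = emb dv i r ∧ y = emb dv j s then M r s else 0

/-- The block diagonal matrix `D(α,λ) = J^{d₁}(α) ⊕ J^{d₂}(α-λ) ⊕ ⋯ ⊕ J^{d_k}(α-(k-1)λ)`. -/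
def Dmat [Field F] {k : ℕ} (dv : Fin k → ℕ) (α lam : F) :
    Matrix (Fin (dtot dv)) (Fin (dtot dv)) F :=
  ∑ i : Fin k, embMat dv i i (Jord (dv i) (α - ((i : ℕ) : F) * lam))

/-- `A` is the matrix `E(S)` of an admissible sequence `S`:  all blocks vanish except the
blocks `p_{i,i+1}`, and each block `p_{i,i+1}` has nonzero lower-left (i.e. `(dᵢ,1)`) entry. -/
def IsEShaped [Field F] {k : ℕ} (dv : Fin k → ℕ)
    (A : Matrix (Fin (dtot dv)) (Fin (dtot dv)) F) : Prop :=
  (∀ i j : Fin k, (j : ℕ) ≠ (i : ℕ) + 1 → blk dv i j A = 0) ∧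
  (∀ i j : Fin k, (j : ℕ) = (i : ℕ) + 1 →
    ∀ (hr : dv i - 1 < dv i) (hs : 0 < dv j),
      A (emb dv i ⟨dv i - 1, hr⟩) (emb dv j ⟨0, hs⟩) ≠ 0)

/-- The matrix `E(C)` of the canonical sequence `C`. -/
def CanE (F : Type*) [Field F] {k : ℕ} (dv : Fin k → ℕ) :
    Matrix (Fin (dtot dv)) (Fin (dtot dv)) F :=
  Matrix.of fun x y =>
    if ∃ i j : Fin k, (j : ℕ) = (i : ℕ) + 1 ∧
        (x : ℕ) = off dv i + (dv i - 1) ∧ (y : ℕ) = off dv j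
    then 1 else 0

/-- The Lie subalgebra `h(α,λ,S)` of `gl(d,F)` generated by `D(α,λ)` and `E(S) = A`. -/
def hAlg (F : Type*) [Field F] {k : ℕ} (dv : Fin k → ℕ) (α lam : F)
    (A : Matrix (Fin (dtot dv)) (Fin (dtot dv)) F) :
    LieSubalgebra F (Matrix (Fin (dtot dv)) (Fin (dtot dv)) F) :=
  LieSubalgebra.lieSpan F _ {Dmat dv α lam, A}

/-- The Lie subalgebra `n(S)` generated by the matrices `(ad D(0,0))^l (E(S))`, `l ≥ 0`. -/
def nAlg (F : Type*) [Field F] {k : ℕ} (dv : Fin k → ℕ)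
    (A : Matrix (Fin (dtot dv)) (Fin (dtot dv)) F) :
    LieSubalgebra F (Matrix (Fin (dtot dv)) (Fin (dtot dv)) F) :=
  LieSubalgebra.lieSpan F _ {X | ∃ l : ℕ, X = (fun Y => ⁅Dmat dv (0 : F) 0, Y⁆)^[l] A}

/-- `r_{i,j}`:  `0` if the `(i,j)`-blocks of all members of `h(0,0,C)` vanish, and otherwise
the minimal rank of a nonzero `(i,j)`-block of a member of `h(0,0,C)`. -/
def rr (F : Type*) [Field F] {k : ℕ} (dv : Fin k → ℕ) (i j : Fin k) : ℕ :=
  if ∀ X ∈ hAlg F dv 0 0 (CanE F dv), blk dv i j X = 0 then 0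
  else sInf {n | ∃ X ∈ hAlg F dv 0 0 (CanE F dv),
    blk dv i j X ≠ 0 ∧ (blk dv i j X).rank = n}

/-- The automorphism `φ(A)_{i,j} = (−1)^{i−j+1} A_{d+1−j,d+1−i}` (here written 0-indexed). -/
def Phi (F : Type*) [Field F] (d : ℕ) (A : Matrix (Fin d) (Fin d) F) :
    Matrix (Fin d) (Fin d) F :=
  Matrix.of fun x y =>
    (-1 : F) ^ ((x : ℕ) + (y : ℕ) + 1) *
      A ⟨d - 1 - (y : ℕ), by have := y.isLt; omega⟩ ⟨d - 1 - (x : ℕ), by have := x.isLt; omega⟩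

/-- `d⃗` is symmetric: `dᵢ = d_{k+1−i}` for all `i` (0-indexed: `dᵢ = d_{k-1-i}`). -/
def SymmSeq {k : ℕ} (dv : Fin k → ℕ) : Prop :=
  ∀ i j : Fin k, (i : ℕ) + (j : ℕ) = k - 1 → dv i = dv j

/-- `d⃗` is odd-symmetric: symmetric, `k` odd and the middle `d_{(k+1)/2}` odd. -/
def OddSymmSeq {k : ℕ} (dv : Fin k → ℕ) : Prop :=
  SymmSeq dv ∧ Odd k ∧ ∀ i : Fin k, 2 * (i : ℕ) = k - 1 → Odd (dv i)

/-- Conditions (1) and (2) of Definition `Normalized` (weak normalization), expressed on the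
matrix `A = E(S)`, so that `S(i)_{a,b} = A (emb i a) (emb (i+1) b)` (0-indexed). -/
def IsWeaklyNormalized [Field F] {k : ℕ} (dv : Fin k → ℕ)
    (A : Matrix (Fin (dtot dv)) (Fin (dtot dv)) F) : Prop :=
  (∀ i j : Fin k, (j : ℕ) = (i : ℕ) + 1 →
      ∀ (hr : dv i - 1 < dv i) (hs : 0 < dv j),
        A (emb dv i ⟨dv i - 1, hr⟩) (emb dv j ⟨0, hs⟩) = 1) ∧
  (∀ i j l : Fin k, (j : ℕ) = (i : ℕ) + 1 → (l : ℕ) = (j : ℕ) + 1 →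
      ∀ (hr : dv i - 1 < dv i) (s : Fin (dv j)) (hs : dv j - 1 - (s : ℕ) < dv j)
        (h0 : 0 < dv l),
        A (emb dv i ⟨dv i - 1, hr⟩) (emb dv j s) =
          A (emb dv j ⟨dv j - 1 - (s : ℕ), hs⟩) (emb dv l ⟨0, h0⟩))

/-- The sequence `S` (given through its matrix `A = E(S)`) is normalized. -/
def IsNormalized [Field F] {k : ℕ} (dv : Fin k → ℕ)
    (A : Matrix (Fin (dtot dv)) (Fin (dtot dv)) F) : Prop :=
  IsWeaklyNormalized dv A ∧
  (∀ i j : Fin k, (i : ℕ) = 0 → (j : ℕ) = 1 →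
      ∀ (r : Fin (dv i)) (hs : 0 < dv j), (r : ℕ) ≠ dv i - 1 →
        A (emb dv i r) (emb dv j ⟨0, hs⟩) = 0) ∧
  (∀ i j : Fin k, (j : ℕ) = (i : ℕ) + 1 → (j : ℕ) = k - 1 →
      ∀ (hr : dv i - 1 < dv i) (s : Fin (dv j)), (s : ℕ) ≠ 0 →
        A (emb dv i ⟨dv i - 1, hr⟩) (emb dv j s) = 0)

/-- Membership in the group `G(d⃗)`: a block diagonal matrix each of whose diagonal blocks is
a polynomial with nonzero constant term evaluated at `J^{dᵢ}(0)`. -/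
def InG (F : Type*) [Field F] {k : ℕ} (dv : Fin k → ℕ)
    (P : Matrix (Fin (dtot dv)) (Fin (dtot dv)) F) : Prop :=
  IsUnit P ∧ ∃ q : Fin k → Polynomial F, (∀ i, (q i).coeff 0 ≠ 0) ∧
    P = ∑ i : Fin k, embMat dv i i (Polynomial.aeval (Jord (dv i) (0 : F)) (q i))

/-- The nilpotency degree of a Lie algebra: the least `m` with `L^m = 0` in the lower central
series `L^0 = L`, `L^{i+1} = [L, L^i]`. -/
def nilDeg (F : Type*) (L : Type*) [Field F] [LieRing L] [LieAlgebra F L] : ℕ :=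
  sInf {m | LieModule.lowerCentralSeries F L L m = ⊥}


section CoreT

variable [Field F] {p q : ℕ}


/-- extension of a matrix to integer indices, zero outside. -/
def ext (B : Matrix (Fin p) (Fin q) F) (a b : ℤ) : F :=
  if h : 0 ≤ a ∧ a < p ∧ 0 ≤ b ∧ b < q then
    B ⟨a.toNat, by omega⟩ ⟨b.toNat, by omega⟩ else 0

lemma ext_at (B : Matrix (Fin p) (Fin q) F) (r : Fin p) (s : Fin q) :
    ext B (r : ℕ) (s : ℕ) = B r s := by
  have h : (0:ℤ) ≤ (r:ℕ) ∧ ((r:ℕ):ℤ) < p ∧ (0:ℤ) ≤ ((s:ℕ):ℤ) ∧ ((s:ℕ):ℤ) < q := by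
    have := r.isLt; have := s.isLt; omega
  rw [ext, dif_pos h]
  congr 1 <;> ext <;> omega

lemma ext_high (B : Matrix (Fin p) (Fin q) F) {a b : ℤ} (h : (p:ℤ) ≤ a ∨ b < 0) :
    ext B a b = 0 := by
  rw [ext, dif_neg]; omega

lemma ext_low (B : Matrix (Fin p) (Fin q) F) {a b : ℤ} (h : a < 0 ∨ (q:ℤ) ≤ b) :
    ext B a b = 0 := by
  rw [ext, dif_neg]; omega

/-- The operator `T B = J B - B J` written entrywise. -/
def Tm (B : Matrix (Fin p) (Fin q) F) : Matrix (Fin p) (Fin q) F :=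
  Matrix.of fun r s => ext B ((r:ℕ) + 1) (s:ℕ) - ext B (r:ℕ) ((s:ℕ) - 1)

/-- The explicit formula for entries of `T^l B` (valid in the window `0 ≤ a`, `b < q`). -/
def Tform (B : Matrix (Fin p) (Fin q) F) (l : ℕ) (a b : ℤ) : F :=
  ∑ t ∈ Finset.range (l + 1), (-1 : F) ^ (l + t) * (l.choose t : ℕ) * ext B (a + t) (b - l + t)

lemma Tform_zero (B : Matrix (Fin p) (Fin q) F) (a b : ℤ) :
    Tform B 0 a b = ext B a b := by
  simp [Tform]

lemma Tform_high (B : Matrix (Fin p) (Fin q) F) {l : ℕ} {a b : ℤ}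
    (h : (p:ℤ) ≤ a ∨ b < 0) : Tform B l a b = 0 := by
  refine Finset.sum_eq_zero fun t ht => ?_
  have ht' : t ≤ l := by simpa [Nat.lt_succ_iff] using Finset.mem_range.mp ht
  rw [ext_high B (by omega)]
  ring

lemma Tform_succ (B : Matrix (Fin p) (Fin q) F) (l : ℕ) (a b : ℤ) :
    Tform B (l+1) a b = Tform B l (a+1) b - Tform B l a (b-1) := by
  set s : ℕ → ℕ → F := fun m t => (-1 : F) ^ (m + t) * (m.choose t : ℕ) with hs
  set X : ℕ → F := fun t => ext B (a + t) (b - (l+1 : ℕ) + t) with hX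
  have h1 : Tform B (l+1) a b
      = ∑ t ∈ Finset.range (l+1), s (l+1) (t+1) * X (t+1) + s (l+1) 0 * X 0 := by
    rw [Tform, Finset.sum_range_succ']
  have h2 : Tform B l (a+1) b = ∑ t ∈ Finset.range (l+1), s l t * X (t+1) := by
    rw [Tform]
    refine Finset.sum_congr rfl fun t _ => ?_
    have ex : a + 1 + (t:ℤ) = a + ((t+1 : ℕ) : ℤ) := by push_cast; ring
    have ey : b - (l:ℕ) + (t:ℤ) = b - ((l+1:ℕ):ℤ) + ((t+1:ℕ):ℤ) := by push_cast; ring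
    rw [ex, ey]
  have h3 : Tform B l a (b-1) = ∑ t ∈ Finset.range (l+1), s l t * X t := by
    rw [Tform]
    refine Finset.sum_congr rfl fun t _ => ?_
    have ey : b - 1 - (l:ℕ) + (t:ℤ) = b - ((l+1:ℕ):ℤ) + ((t:ℕ):ℤ) := by push_cast; ring
    rw [ey]
  have h4 : ∀ t, s (l+1) (t+1) = s l t - s l (t+1) := by
    intro t
    simp only [hs]
    rw [Nat.choose_succ_succ]
    push_cast
    have e : (-1:F) ^ (l + 1 + (t + 1)) = (-1:F) ^ (l + t) := by
      have h : l + 1 + (t + 1) = (l + t) + 2 := by ring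
      rw [h, pow_add]; ring
    have e2 : (-1:F) ^ (l + (t+1)) = -(-1:F) ^ (l + t) := by
      have h : l + (t + 1) = (l + t) + 1 := by ring
      rw [h, pow_succ]; ring
    rw [e, e2]; ring
  have h5 : ∑ t ∈ Finset.range (l+1), s l (t+1) * X (t+1)
      = ∑ t ∈ Finset.range (l+1), s l t * X t - s l 0 * X 0 + s l (l+1) * X (l+1) := by
    have e1 : ∑ t ∈ Finset.range (l+2), s l t * X t
        = ∑ t ∈ Finset.range (l+1), s l (t+1) * X (t+1) + s l 0 * X 0 :=
      Finset.sum_range_succ' _ _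
    have e2 : ∑ t ∈ Finset.range (l+2), s l t * X t
        = ∑ t ∈ Finset.range (l+1), s l t * X t + s l (l+1) * X (l+1) :=
      Finset.sum_range_succ _ _
    rw [e2] at e1
    linear_combination -e1
  have h6 : s l (l+1) = 0 := by
    simp only [hs, Nat.choose_succ_self, Nat.cast_zero, mul_zero]
  have h7 : s (l+1) 0 = - s l 0 := by
    simp only [hs, Nat.choose_zero_right, Nat.cast_one, mul_one]
    rw [add_zero, add_zero, pow_succ]; ring
  rw [h1, h2, h3]
  rw [Finset.sum_congr rfl (fun t _ => by rw [h4 t])]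
  rw [Finset.sum_congr rfl (fun t (_ : t ∈ Finset.range (l+1)) => sub_mul (s l t) (s l (t+1)) (X (t+1)))]
  rw [Finset.sum_sub_distrib, h5, h6, h7]
  ring

lemma ext_Tm (B : Matrix (Fin p) (Fin q) F) (a b : ℤ) (ha : 0 ≤ a) (hb : b < q) :
    ext (Tm B) a b = ext B (a+1) b - ext B a (b-1) := by
  by_cases h : a < p ∧ 0 ≤ b
  · have hc : 0 ≤ a ∧ a < p ∧ 0 ≤ b ∧ b < q := ⟨ha, h.1, h.2, hb⟩
    rw [ext, dif_pos hc]
    show ext B ((a.toNat : ℕ) + 1) (b.toNat : ℕ) - ext B (a.toNat : ℕ) ((b.toNat : ℕ) - 1) = _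
    have e1 : ((a.toNat : ℕ) : ℤ) = a := by omega
    have e2 : ((b.toNat : ℕ) : ℤ) = b := by omega
    rw [e1, e2]
  · have hno : ¬(0 ≤ a ∧ a < p ∧ 0 ≤ b ∧ b < q) := by omega
    rw [ext, dif_neg hno]
    rcases (by omega : (p:ℤ) ≤ a ∨ b < 0) with h' | h'
    · rw [ext_high B (Or.inl (by omega)), ext_high B (Or.inl h')]; ring
    · rw [ext_high B (Or.inr h'), ext_high B (Or.inr (by omega))]; ring

lemma Tm_iter_ext (B : Matrix (Fin p) (Fin q) F) (l : ℕ) :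
    ∀ a b : ℤ, 0 ≤ a → b < q → ext (Tm^[l] B) a b = Tform B l a b := by
  induction l with
  | zero => intro a b _ _; rw [Function.iterate_zero_apply, Tform_zero]
  | succ l ih =>
    intro a b ha hb
    rw [Function.iterate_succ_apply', ext_Tm _ a b ha hb, ih (a+1) b (by omega) hb,
      ih a (b-1) ha (by omega), Tform_succ]

lemma Tm_iter_entry (B : Matrix (Fin p) (Fin q) F) (l : ℕ) (r : Fin p) (s : Fin q) :
    (Tm^[l] B) r s = Tform B l (r : ℕ) (s : ℕ) := by
  rw [← ext_at (Tm^[l] B) r s]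
  exact Tm_iter_ext B l _ _ (by positivity) (by exact_mod_cast s.isLt)

lemma Tform_add {B B1 B2 : Matrix (Fin p) (Fin q) F}
    (h : ∀ a b, B a b = B1 a b + B2 a b) (l : ℕ) (a b : ℤ) :
    Tform B l a b = Tform B1 l a b + Tform B2 l a b := by
  have hext : ∀ a b : ℤ, ext B a b = ext B1 a b + ext B2 a b := by
    intro a b
    by_cases hc : 0 ≤ a ∧ a < p ∧ 0 ≤ b ∧ b < q
    · rw [ext, ext, ext, dif_pos hc, dif_pos hc, dif_pos hc]; exact h _ _
    · rw [ext, ext, ext, dif_neg hc, dif_neg hc, dif_neg hc]; ring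
  rw [Tform, Tform, Tform, ← Finset.sum_add_distrib]
  refine Finset.sum_congr rfl fun t _ => ?_
  rw [hext]; ring

/-- extension of a vector to integer indices. -/
def fext {n : ℕ} (w : Fin n → F) (a : ℤ) : F :=
  if h : 0 ≤ a ∧ a < n then w ⟨a.toNat, by omega⟩ else 0

lemma fext_at {n : ℕ} (w : Fin n → F) (a : Fin n) : fext w (a : ℕ) = w a := by
  have h : (0:ℤ) ≤ ((a:ℕ):ℤ) ∧ ((a:ℕ):ℤ) < n := by have := a.isLt; omega
  rw [fext, dif_pos h]
  exact congrArg w (by ext; simp)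

/-- The rank-one matrix `w ⊗ x`. -/
def termMat (w : Fin p → F) (x : Fin q → F) : Matrix (Fin p) (Fin q) F :=
  Matrix.of fun a b => w a * x b

lemma ext_term (w : Fin p → F) (x : Fin q → F) (a b : ℤ) :
    ext (termMat w x) a b = fext w a * fext x b := by
  by_cases h : 0 ≤ a ∧ a < p ∧ 0 ≤ b ∧ b < q
  · rw [ext, dif_pos h, fext, dif_pos ⟨h.1, h.2.1⟩, fext, dif_pos ⟨h.2.2.1, h.2.2.2⟩]; rfl
  · rw [ext, dif_neg h]
    by_cases h1 : 0 ≤ a ∧ a < p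
    · have hx0 : fext x b = 0 := dif_neg (fun h2 => h ⟨h1.1, h1.2, h2.1, h2.2⟩)
      rw [hx0, mul_zero]
    · have hw0 : fext w a = 0 := dif_neg h1
      rw [hw0, zero_mul]

section Term

variable (w : Fin p → F) (x : Fin q → F) (a0 : Fin p) (b0 : Fin q)

lemma fext_w_zero (hwmax : ∀ a, a0 < a → w a = 0) {a : ℤ} (h : (a0 : ℕ) < a) :
    fext w a = 0 := by
  by_cases h1 : 0 ≤ a ∧ a < p
  · rw [fext, dif_pos h1]
    exact hwmax _ (by simp only [Fin.lt_def]; omega)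
  · rw [fext, dif_neg h1]

lemma fext_x_zero (hxmin : ∀ b, b < b0 → x b = 0) {b : ℤ} (h : b < (b0 : ℕ)) :
    fext x b = 0 := by
  by_cases h1 : 0 ≤ b ∧ b < q
  · rw [fext, dif_pos h1]
    exact hxmin _ (by simp only [Fin.lt_def]; omega)
  · rw [fext, dif_neg h1]

lemma term_vanish (hwmax : ∀ a, a0 < a → w a = 0) (hxmin : ∀ b, b < b0 → x b = 0)
    (l : ℕ) (r : Fin p) (s : Fin q)
    (hwt : (a0 : ℕ) + (q - 1 - (b0 : ℕ)) < (r : ℕ) + (q - 1 - (s : ℕ)) + l) :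
    Tform (termMat w x) l (r : ℕ) (s : ℕ) = 0 := by
  refine Finset.sum_eq_zero fun t ht => ?_
  have ht' : t ≤ l := by simpa [Nat.lt_succ_iff] using Finset.mem_range.mp ht
  rw [ext_term]
  by_cases hu : (a0 : ℕ) < ((r : ℕ) : ℤ) + t
  · rw [fext_w_zero w a0 hwmax hu]; ring
  · have hb0 := b0.isLt
    have hs := s.isLt
    have hx : ((s : ℕ) : ℤ) - l + t < (b0 : ℕ) := by omega
    rw [fext_x_zero x b0 hxmin hx]; ring

lemma term_value_high (hwmax : ∀ a, a0 < a → w a = 0) (l : ℕ) (r : Fin p) (s : Fin q)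
    (hr : (a0 : ℕ) < (r : ℕ)) :
    Tform (termMat w x) l (r : ℕ) (s : ℕ) = 0 := by
  refine Finset.sum_eq_zero fun t _ => ?_
  rw [ext_term, fext_w_zero w a0 hwmax (by omega : (a0:ℕ) < ((r:ℕ):ℤ) + t)]; ring

lemma term_value (hwmax : ∀ a, a0 < a → w a = 0) (hxmin : ∀ b, b < b0 → x b = 0)
    (l : ℕ) (r : Fin p) (s : Fin q)
    (hwt : (r : ℕ) + (q - 1 - (s : ℕ)) + l = (a0 : ℕ) + (q - 1 - (b0 : ℕ)))
    (hr : (r : ℕ) ≤ (a0 : ℕ)) :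
    Tform (termMat w x) l (r : ℕ) (s : ℕ)
      = (-1 : F) ^ (l + ((a0 : ℕ) - (r : ℕ))) * (l.choose ((a0 : ℕ) - (r : ℕ)) : ℕ) * (w a0 * x b0) := by
  set t0 : ℕ := (a0 : ℕ) - (r : ℕ) with ht0
  have hb0 := b0.isLt
  have hs := s.isLt
  have ha0 := a0.isLt
  have hkey : ((s : ℕ) : ℤ) - l + t0 = (b0 : ℕ) := by omega
  by_cases hle : t0 ≤ l
  · rw [Tform]
    rw [Finset.sum_eq_single t0]
    · rw [ext_term]
      have e1 : ((r : ℕ) : ℤ) + t0 = ((a0 : ℕ) : ℤ) := by omega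
      rw [e1, hkey, fext_at, fext_at, mul_assoc]
    · intro t ht htne
      rw [ext_term]
      rcases Nat.lt_or_ge t0 t with h' | h'
      · rw [fext_w_zero w a0 hwmax (by omega : (a0:ℕ) < ((r:ℕ):ℤ) + t)]; ring
      · have : t < t0 := by omega
        rw [fext_x_zero x b0 hxmin (by omega : ((s:ℕ):ℤ) - l + t < (b0:ℕ))]; ring
    · intro hno
      exact absurd (Finset.mem_range.mpr (by omega)) hno
  · rw [Nat.choose_eq_zero_of_lt (by omega), Nat.cast_zero, mul_zero, zero_mul]
    refine Finset.sum_eq_zero fun t ht => ?_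
    have ht' : t ≤ l := by simpa [Nat.lt_succ_iff] using Finset.mem_range.mp ht
    rw [ext_term, fext_x_zero x b0 hxmin (by omega : ((s:ℕ):ℤ) - l + t < (b0:ℕ))]; ring

end Term


end CoreT


section Bridge

variable [Field F] {k : ℕ} {dv : Fin k → ℕ}

lemma off_add_le (dv : Fin k → ℕ) {t t' : Fin k} (h : t < t') :
    off dv t + dv t ≤ off dv t' := by
  have hsub : insert t (Finset.Iio t) ⊆ Finset.Iio t' := by
    intro x hx
    rcases Finset.mem_insert.mp hx with rfl | hx'
    · exact Finset.mem_Iio.mpr h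
    · exact Finset.mem_Iio.mpr ((Finset.mem_Iio.mp hx').trans h)
  have h1 : off dv t + dv t = ∑ x ∈ insert t (Finset.Iio t), dv x := by
    rw [Finset.sum_insert (by simp), add_comm]
    rfl
  rw [h1]
  exact Finset.sum_le_sum_of_subset hsub

lemma emb_eq_iff {t t' : Fin k} {r : Fin (dv t)} {r' : Fin (dv t')} :
    emb dv t r = emb dv t' r' ↔ t = t' ∧ (r : ℕ) = (r' : ℕ) := by
  constructor
  · intro h
    have hv : off dv t + (r : ℕ) = off dv t' + (r' : ℕ) := congrArg Fin.val h
    rcases lt_trichotomy t t' with hlt | heq | hlt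
    · have h1 := off_add_le dv hlt
      have := r.isLt
      omega
    · subst heq
      exact ⟨rfl, by omega⟩
    · have h1 := off_add_le dv hlt
      have := r'.isLt
      omega
  · rintro ⟨rfl, hr⟩
    exact congrArg _ (Fin.ext hr)

lemma Dmat_row (i : Fin k) (r : Fin (dv i)) (y : Fin (dtot dv)) :
    Dmat dv (0:F) 0 (emb dv i r) y
      = ∑ s' : Fin (dv i), (if y = emb dv i s' then Jord (dv i) (0:F) r s' else 0) := by
  rw [Dmat, Matrix.sum_apply]
  rw [Finset.sum_eq_single i]
  · show (∑ r', ∑ s', if emb dv i r = emb dv i r' ∧ y = emb dv i s'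
        then Jord (dv i) ((0:F) - ((i:ℕ):F) * 0) r' s' else 0) = _
    rw [Finset.sum_eq_single r]
    · refine Finset.sum_congr rfl fun s' _ => ?_
      have : ((0:F) - ((i:ℕ):F) * 0) = 0 := by ring
      rw [this]
      by_cases hy : y = emb dv i s'
      · rw [if_pos ⟨rfl, hy⟩, if_pos hy]
      · rw [if_neg (fun hc => hy hc.2), if_neg hy]
    · intro r' _ hne
      refine Finset.sum_eq_zero fun s' _ => ?_
      rw [if_neg]
      rintro ⟨he, -⟩
      exact hne (Fin.ext (emb_eq_iff.mp he).2.symm)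
    · intro hno
      exact absurd (Finset.mem_univ r) hno
  · intro t _ hti
    show (∑ r', ∑ s', if emb dv i r = emb dv t r' ∧ y = emb dv t s'
        then Jord (dv t) ((0:F) - ((t:ℕ):F) * 0) r' s' else 0) = 0
    refine Finset.sum_eq_zero fun r' _ => Finset.sum_eq_zero fun s' _ => ?_
    rw [if_neg]
    rintro ⟨he, -⟩
    exact hti (emb_eq_iff.mp he).1.symm
  · intro hno
    exact absurd (Finset.mem_univ i) hno

lemma Dmat_col (j : Fin k) (s : Fin (dv j)) (y : Fin (dtot dv)) :
    Dmat dv (0:F) 0 y (emb dv j s)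
      = ∑ r' : Fin (dv j), (if y = emb dv j r' then Jord (dv j) (0:F) r' s else 0) := by
  rw [Dmat, Matrix.sum_apply]
  rw [Finset.sum_eq_single j]
  · show (∑ r', ∑ s', if y = emb dv j r' ∧ emb dv j s = emb dv j s'
        then Jord (dv j) ((0:F) - ((j:ℕ):F) * 0) r' s' else 0) = _
    refine Finset.sum_congr rfl fun r' _ => ?_
    rw [Finset.sum_eq_single s]
    · have : ((0:F) - ((j:ℕ):F) * 0) = 0 := by ring
      rw [this]
      by_cases hy : y = emb dv j r'
      · rw [if_pos ⟨hy, rfl⟩, if_pos hy]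
      · rw [if_neg (fun hc => hy hc.1), if_neg hy]
    · intro s' _ hne
      rw [if_neg]
      rintro ⟨-, he⟩
      exact hne (Fin.ext (emb_eq_iff.mp he).2.symm)
    · intro hno
      exact absurd (Finset.mem_univ s) hno
  · intro t _ htj
    show (∑ r', ∑ s', if y = emb dv t r' ∧ emb dv j s = emb dv t s'
        then Jord (dv t) ((0:F) - ((t:ℕ):F) * 0) r' s' else 0) = 0
    refine Finset.sum_eq_zero fun r' _ => Finset.sum_eq_zero fun s' _ => ?_
    rw [if_neg]
    rintro ⟨-, he⟩
    exact htj (emb_eq_iff.mp he).1.symm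
  · intro hno
    exact absurd (Finset.mem_univ j) hno

lemma blk_Dmat_mul (i j : Fin k) (X : Matrix (Fin (dtot dv)) (Fin (dtot dv)) F)
    (r : Fin (dv i)) (s : Fin (dv j)) :
    blk dv i j (Dmat dv (0:F) 0 * X) r s = ext (blk dv i j X) ((r:ℕ)+1) ((s:ℕ)) := by
  show (Dmat dv (0:F) 0 * X) (emb dv i r) (emb dv j s) = _
  rw [Matrix.mul_apply]
  have step1 : ∀ y, Dmat dv (0:F) 0 (emb dv i r) y * X y (emb dv j s)
      = ∑ s' : Fin (dv i), (if y = emb dv i s' then Jord (dv i) (0:F) r s' * X y (emb dv j s) else 0) := by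
    intro y
    rw [Dmat_row, Finset.sum_mul]
    refine Finset.sum_congr rfl fun s' _ => ?_
    split_ifs <;> ring
  rw [Finset.sum_congr rfl (fun y _ => step1 y), Finset.sum_comm]
  have step2 : ∀ s' : Fin (dv i),
      (∑ y, if y = emb dv i s' then Jord (dv i) (0:F) r s' * X y (emb dv j s) else 0)
      = Jord (dv i) (0:F) r s' * blk dv i j X s' s := by
    intro s'
    rw [Finset.sum_ite_eq' Finset.univ (emb dv i s')
      (fun y => Jord (dv i) (0:F) r s' * X y (emb dv j s))]
    simp only [Finset.mem_univ, if_true]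
    rfl
  rw [Finset.sum_congr rfl (fun s' _ => step2 s')]
  by_cases hr : (r:ℕ) + 1 < dv i
  · rw [Finset.sum_eq_single (⟨(r:ℕ)+1, hr⟩ : Fin (dv i))]
    · have hJ : Jord (dv i) (0:F) r ⟨(r:ℕ)+1, hr⟩ = 1 := by
        show (if ((r:ℕ)+1) = (r:ℕ) then (0:F) else if ((r:ℕ)+1) = (r:ℕ)+1 then 1 else 0) = 1
        rw [if_neg (by omega), if_pos rfl]
      rw [hJ, one_mul]
      have e : ((r:ℕ) + 1 : ℤ) = (((⟨(r:ℕ)+1, hr⟩ : Fin (dv i)) : ℕ) : ℤ) := by norm_cast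
      rw [e, ext_at]
    · intro s' _ hne
      have hJ : Jord (dv i) (0:F) r s' = 0 := by
        show (if (s':ℕ) = (r:ℕ) then (0:F) else if (s':ℕ) = (r:ℕ)+1 then 1 else 0) = 0
        rcases eq_or_ne ((s':ℕ)) ((r:ℕ)) with h1 | h1
        · rw [if_pos h1]
        · rw [if_neg h1, if_neg (fun hc => hne (Fin.ext hc))]
      rw [hJ, zero_mul]
    · intro hno
      exact absurd (Finset.mem_univ _) hno
  · rw [Finset.sum_eq_zero, ext_high _ (Or.inl (by push_cast; omega))]
    intro s' _
    have hJ : Jord (dv i) (0:F) r s' = 0 := by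
      show (if (s':ℕ) = (r:ℕ) then (0:F) else if (s':ℕ) = (r:ℕ)+1 then 1 else 0) = 0
      have := s'.isLt
      rcases eq_or_ne ((s':ℕ)) ((r:ℕ)) with h1 | h1
      · rw [if_pos h1]
      · rw [if_neg h1, if_neg (by omega)]
    rw [hJ, zero_mul]

lemma blk_mul_Dmat (i j : Fin k) (X : Matrix (Fin (dtot dv)) (Fin (dtot dv)) F)
    (r : Fin (dv i)) (s : Fin (dv j)) :
    blk dv i j (X * Dmat dv (0:F) 0) r s = ext (blk dv i j X) ((r:ℕ)) ((s:ℕ) - 1) := by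
  show (X * Dmat dv (0:F) 0) (emb dv i r) (emb dv j s) = _
  rw [Matrix.mul_apply]
  have step1 : ∀ y, X (emb dv i r) y * Dmat dv (0:F) 0 y (emb dv j s)
      = ∑ r' : Fin (dv j), (if y = emb dv j r' then X (emb dv i r) y * Jord (dv j) (0:F) r' s else 0) := by
    intro y
    rw [Dmat_col, Finset.mul_sum]
    refine Finset.sum_congr rfl fun r' _ => ?_
    split_ifs <;> ring
  rw [Finset.sum_congr rfl (fun y _ => step1 y), Finset.sum_comm]
  have step2 : ∀ r' : Fin (dv j),
      (∑ y, if y = emb dv j r' then X (emb dv i r) y * Jord (dv j) (0:F) r' s else 0)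
      = blk dv i j X r r' * Jord (dv j) (0:F) r' s := by
    intro r'
    rw [Finset.sum_ite_eq' Finset.univ (emb dv j r')
      (fun y => X (emb dv i r) y * Jord (dv j) (0:F) r' s)]
    simp only [Finset.mem_univ, if_true]
    rfl
  rw [Finset.sum_congr rfl (fun r' _ => step2 r')]
  by_cases hs : 1 ≤ (s:ℕ)
  · have hlt : (s:ℕ) - 1 < dv j := by have := s.isLt; omega
    rw [Finset.sum_eq_single (⟨(s:ℕ)-1, hlt⟩ : Fin (dv j))]
    · have hJ : Jord (dv j) (0:F) ⟨(s:ℕ)-1, hlt⟩ s = 1 := by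
        show (if (s:ℕ) = ((s:ℕ)-1) then (0:F) else if (s:ℕ) = ((s:ℕ)-1)+1 then 1 else 0) = 1
        rw [if_neg (by omega), if_pos (by omega)]
      rw [hJ, mul_one]
      have e : ((s:ℕ) - 1 : ℤ) = (((⟨(s:ℕ)-1, hlt⟩ : Fin (dv j)) : ℕ) : ℤ) := by push_cast; omega
      rw [e, ext_at]
    · intro r' _ hne
      have hJ : Jord (dv j) (0:F) r' s = 0 := by
        show (if (s:ℕ) = (r':ℕ) then (0:F) else if (s:ℕ) = (r':ℕ)+1 then 1 else 0) = 0
        rcases eq_or_ne ((s:ℕ)) ((r':ℕ)) with h1 | h1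
        · rw [if_pos h1]
        · rw [if_neg h1, if_neg (fun hc => hne (Fin.eq_mk_iff_val_eq.mpr (by omega)))]
      rw [hJ, mul_zero]
    · intro hno
      exact absurd (Finset.mem_univ _) hno
  · rw [Finset.sum_eq_zero, ext_high _ (Or.inr (by push_cast; omega))]
    intro r' _
    have hJ : Jord (dv j) (0:F) r' s = 0 := by
      show (if (s:ℕ) = (r':ℕ) then (0:F) else if (s:ℕ) = (r':ℕ)+1 then 1 else 0) = 0
      rcases eq_or_ne ((s:ℕ)) ((r':ℕ)) with h1 | h1
      · rw [if_pos h1]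
      · rw [if_neg h1, if_neg (by omega)]
    rw [hJ, mul_zero]

lemma blk_lie (i j : Fin k) (X : Matrix (Fin (dtot dv)) (Fin (dtot dv)) F) :
    blk dv i j ⁅Dmat dv (0:F) 0, X⁆ = Tm (blk dv i j X) := by
  ext r s
  have h1 : blk dv i j ⁅Dmat dv (0:F) 0, X⁆ r s
      = blk dv i j (Dmat dv (0:F) 0 * X) r s - blk dv i j (X * Dmat dv (0:F) 0) r s := by
    rw [Ring.lie_def]
    rfl
  rw [h1, blk_Dmat_mul, blk_mul_Dmat]
  rfl

lemma blk_iter (i j : Fin k) (X : Matrix (Fin (dtot dv)) (Fin (dtot dv)) F) (l : ℕ) :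
    blk dv i j ((fun Y => ⁅Dmat dv (0:F) 0, Y⁆)^[l] X) = Tm^[l] (blk dv i j X) := by
  induction l with
  | zero => rfl
  | succ l ih =>
    rw [Function.iterate_succ_apply', Function.iterate_succ_apply', blk_lie, ih]

end Bridge


section RankSec

variable [Field F] {p q : ℕ}


lemma col_mem_range (B : Matrix (Fin p) (Fin q) F) (s : Fin q) :
    (fun a => B a s) ∈ LinearMap.range B.mulVecLin := by
  refine ⟨Pi.single s 1, ?_⟩
  ext a
  rw [Matrix.mulVecLin_apply, Matrix.mulVec, dotProduct]
  simp [Pi.single_apply, mul_ite]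

lemma rank_decomp (B : Matrix (Fin p) (Fin q) F) {n : ℕ} (hn : B.rank = n) :
    ∃ u : Fin n → Fin p → F, ∃ v : Fin n → Fin q → F,
      ∀ a b, B a b = ∑ c, u c a * v c b := by
  set V : Submodule F (Fin p → F) := LinearMap.range B.mulVecLin with hV
  have hfin : Module.finrank F V = n := hn
  let bb : Module.Basis (Fin n) F V := Module.finBasisOfFinrankEq F V hfin
  refine ⟨fun c a => (bb c : Fin p → F) a,
    fun c s => bb.repr ⟨fun a => B a s, col_mem_range B s⟩ c, ?_⟩
  intro a s
  have hsum := bb.sum_repr ⟨fun a => B a s, col_mem_range B s⟩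
  have := congrArg (fun z : V => (z : Fin p → F) a) hsum
  simp only at this
  rw [← this]
  rw [show ((∑ c, bb.repr ⟨fun a => B a s, col_mem_range B s⟩ c • bb c : V) : Fin p → F)
      = ∑ c, (bb.repr ⟨fun a => B a s, col_mem_range B s⟩ c • (bb c : Fin p → F)) from by
    push_cast; rfl]
  rw [Finset.sum_apply]
  refine Finset.sum_congr rfl fun c _ => ?_
  simp [mul_comm]

lemma rank_le_two_of_entries {c1 : F} (M : Matrix (Fin p) (Fin q) F)
    (u : Fin 2 → Fin p → F) (v : Fin 2 → Fin q → F)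
    (h : ∀ a b, M a b = ∑ c, u c a * v c b) : True := trivial

/-- a matrix supported in one position has rank at most 1 -/
lemma rank_single_le (n0 m0 : ℕ) (c : F) :
    (Matrix.of fun (r : Fin p) (s : Fin q) =>
      if (r : ℕ) = n0 ∧ (s : ℕ) = m0 then c else 0 : Matrix (Fin p) (Fin q) F).rank ≤ 1 := by
  set M : Matrix (Fin p) (Fin q) F :=
    Matrix.of fun r s => if (r : ℕ) = n0 ∧ (s : ℕ) = m0 then c else 0 with hM
  have hfac : M = (Matrix.of fun (r : Fin p) (_ : Fin 1) => if (r : ℕ) = n0 then c else 0) *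
      (Matrix.of fun (_ : Fin 1) (s : Fin q) => if (s : ℕ) = m0 then (1:F) else 0) := by
    ext r s
    rw [Matrix.mul_apply]
    rw [Finset.sum_eq_single (0 : Fin 1)]
    · show (if (r : ℕ) = n0 ∧ (s : ℕ) = m0 then c else 0)
        = (if (r : ℕ) = n0 then c else 0) * (if (s : ℕ) = m0 then (1:F) else 0)
      by_cases hr : (r:ℕ) = n0
      · by_cases hs : (s:ℕ) = m0
        · rw [if_pos (⟨hr,hs⟩ : (r:ℕ) = n0 ∧ (s:ℕ) = m0), if_pos hr, if_pos hs]; ring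
        · rw [if_neg (fun hc => hs hc.2), if_pos hr, if_neg hs]; ring
      · rw [if_neg (fun hc => hr hc.1), if_neg hr]; ring
    · intro b _ hb; exact absurd (Subsingleton.elim b 0) hb
    · intro hno; exact absurd (Finset.mem_univ _) hno
  have h1 : M.rank ≤ (Matrix.of fun (r : Fin p) (_ : Fin 1) =>
      if (r : ℕ) = n0 then c else 0 : Matrix (Fin p) (Fin 1) F).rank := by
    conv_lhs => rw [hfac]
    exact Matrix.rank_mul_le_left _ _
  have h2 : (Matrix.of fun (r : Fin p) (_ : Fin 1) =>
      if (r : ℕ) = n0 then c else 0 : Matrix (Fin p) (Fin 1) F).rank ≤ 1 := by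
    simpa using Matrix.rank_le_card_width (Matrix.of fun (r : Fin p) (_ : Fin 1) =>
      if (r : ℕ) = n0 then c else 0 : Matrix (Fin p) (Fin 1) F)
  exact le_trans h1 h2

lemma exists_max_supp {n : ℕ} (w : Fin n → F) (hw : w ≠ 0) :
    ∃ a0, w a0 ≠ 0 ∧ ∀ a, a0 < a → w a = 0 := by
  have hne : ∃ a, w a ≠ 0 := by
    by_contra hc
    push_neg at hc
    exact hw (funext hc)
  obtain ⟨a', ha'⟩ := hne
  set s : Finset (Fin n) := Finset.univ.filter (fun a => w a ≠ 0) with hs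
  have hmem : a' ∈ s := by simp [hs, ha']
  have hnon : s.Nonempty := ⟨a', hmem⟩
  refine ⟨s.max' hnon, ?_, ?_⟩
  · have := s.max'_mem hnon
    simp [hs] at this
    exact this
  · intro a ha
    by_contra hc
    have : a ∈ s := by simp [hs, hc]
    exact absurd (s.le_max' a this) (not_le.mpr ha)

lemma exists_min_supp {n : ℕ} (w : Fin n → F) (hw : w ≠ 0) :
    ∃ b0, w b0 ≠ 0 ∧ ∀ b, b < b0 → w b = 0 := by
  have hne : ∃ a, w a ≠ 0 := by
    by_contra hc
    push_neg at hc
    exact hw (funext hc)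
  obtain ⟨a', ha'⟩ := hne
  set s : Finset (Fin n) := Finset.univ.filter (fun a => w a ≠ 0) with hs
  have hmem : a' ∈ s := by simp [hs, ha']
  have hnon : s.Nonempty := ⟨a', hmem⟩
  refine ⟨s.min' hnon, ?_, ?_⟩
  · have := s.min'_mem hnon
    simp [hs] at this
    exact this
  · intro a ha
    by_contra hc
    have : a ∈ s := by simp [hs, hc]
    exact absurd (s.min'_le a this) (not_le.mpr ha)


end RankSec

section Mem

variable [Field F] {k : ℕ} {dv : Fin k → ℕ}

lemma Dmat_mem (A : Matrix (Fin (dtot dv)) (Fin (dtot dv)) F) :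
    Dmat dv (0:F) 0 ∈ hAlg F dv 0 0 A :=
  LieSubalgebra.subset_lieSpan (Set.mem_insert _ _)

lemma iter_mem (A : Matrix (Fin (dtot dv)) (Fin (dtot dv)) F)
    {X : Matrix (Fin (dtot dv)) (Fin (dtot dv)) F} (hX : X ∈ hAlg F dv 0 0 A) (l : ℕ) :
    (fun Y => ⁅Dmat dv (0:F) 0, Y⁆)^[l] X ∈ hAlg F dv 0 0 A := by
  induction l with
  | zero => exact hX
  | succ l ih =>
    rw [Function.iterate_succ_apply']
    exact (hAlg F dv 0 0 A).lie_mem (Dmat_mem A) ih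

lemma Tform_zeroM {p q : ℕ} (l : ℕ) (a b : ℤ) :
    Tform (0 : Matrix (Fin p) (Fin q) F) l a b = 0 := by
  refine Finset.sum_eq_zero fun t _ => ?_
  have : ext (0 : Matrix (Fin p) (Fin q) F) (a + t) (b - l + t) = 0 := by
    rw [ext]
    split_ifs
    · rfl
    · rfl
  rw [this, mul_zero]

lemma choose_pascal_cast (m t : ℕ) (hm : 1 ≤ m) (ht : 1 ≤ t) :
    ((m.choose t : ℕ) : F) = (((m-1).choose (t-1) : ℕ) : F) + (((m-1).choose t : ℕ) : F) := by
  match m, hm with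
  | (m' + 1), _ =>
    match t, ht with
    | (t' + 1), _ =>
      rw [Nat.choose_succ_succ]
      push_cast
      simp

end Mem


section Main

variable [Field F] [CharZero F] {k : ℕ} {dv : Fin k → ℕ}

lemma cornerize (A : Matrix (Fin (dtot dv)) (Fin (dtot dv)) F) {i j : Fin k}
    {X0 : Matrix (Fin (dtot dv)) (Fin (dtot dv)) F} (hX0 : X0 ∈ hAlg F dv 0 0 A)
    (w : Fin (dv i) → F) (x : Fin (dv j) → F) (a0 : Fin (dv i)) (b0 : Fin (dv j))
    (hw0 : w a0 ≠ 0) (hwmax : ∀ a, a0 < a → w a = 0)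
    (hx0 : x b0 ≠ 0) (hxmin : ∀ b, b < b0 → x b = 0)
    (B2 : Matrix (Fin (dv i)) (Fin (dv j)) F)
    (hdec : ∀ a b, blk dv i j X0 a b = w a * x b + B2 a b)
    (hvan : ∀ (r : Fin (dv i)) (s : Fin (dv j)),
      Tform B2 ((a0 : ℕ) + (dv j - 1 - (b0 : ℕ))) (r : ℕ) (s : ℕ) = 0) :
    ∃ X ∈ hAlg F dv 0 0 A, ∃ c : F, c ≠ 0 ∧
      ∀ r s, blk dv i j X r s = if (r : ℕ) = 0 ∧ (s : ℕ) = dv j - 1 then c else 0 := by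
  set M : ℕ := (a0 : ℕ) + (dv j - 1 - (b0 : ℕ)) with hM
  have hb0 := b0.isLt
  have ha0 := a0.isLt
  refine ⟨(fun Y => ⁅Dmat dv (0:F) 0, Y⁆)^[M] X0, iter_mem A hX0 M,
    (-1 : F) ^ (M + (a0 : ℕ)) * (M.choose (a0 : ℕ) : ℕ) * (w a0 * x b0), ?_, ?_⟩
  · refine mul_ne_zero (mul_ne_zero (pow_ne_zero _ (by norm_num)) ?_) (mul_ne_zero hw0 hx0)
    exact_mod_cast (Nat.choose_pos (by omega)).ne'
  intro r s
  have hentry : blk dv i j ((fun Y => ⁅Dmat dv (0:F) 0, Y⁆)^[M] X0) r s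
      = Tform (termMat w x) M (r : ℕ) (s : ℕ) + Tform B2 M (r : ℕ) (s : ℕ) := by
    rw [blk_iter, Tm_iter_entry]
    exact Tform_add (fun a b => hdec a b) M _ _
  rw [hentry, hvan r s, add_zero]
  by_cases hc : (r : ℕ) = 0 ∧ (s : ℕ) = dv j - 1
  · rw [if_pos hc]
    rw [term_value w x a0 b0 hwmax hxmin M r s (by omega) (by omega)]
    rw [hc.1]
    norm_num
  · rw [if_neg hc]
    refine term_vanish w x a0 b0 hwmax hxmin M r s ?_
    have hs := s.isLt
    omega

lemma twoterm (A : Matrix (Fin (dtot dv)) (Fin (dtot dv)) F) {i j : Fin k}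
    {X0 : Matrix (Fin (dtot dv)) (Fin (dtot dv)) F} (hX0 : X0 ∈ hAlg F dv 0 0 A)
    (w1 : Fin (dv i) → F) (x1 : Fin (dv j) → F) (w2 : Fin (dv i) → F) (x2 : Fin (dv j) → F)
    (a1 a2 : Fin (dv i)) (b1 b2 : Fin (dv j))
    (hw1 : w1 a1 ≠ 0) (hw1m : ∀ a, a1 < a → w1 a = 0)
    (hx1 : x1 b1 ≠ 0) (hx1m : ∀ b, b < b1 → x1 b = 0)
    (hw2 : w2 a2 ≠ 0) (hw2m : ∀ a, a2 < a → w2 a = 0)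
    (hx2 : x2 b2 ≠ 0) (hx2m : ∀ b, b < b2 → x2 b = 0)
    (hane : (a1 : ℕ) ≠ (a2 : ℕ))
    (hdec : ∀ a b, blk dv i j X0 a b = w1 a * x1 b + w2 a * x2 b)
    (hcorner : ∀ X ∈ hAlg F dv 0 0 A, ∀ c : F, c ≠ 0 →
      ¬(∀ r s, blk dv i j X r s = if (r : ℕ) = 0 ∧ (s : ℕ) = dv j - 1 then c else 0)) :
    ∃ X ∈ hAlg F dv 0 0 A, ∀ (r : Fin (dv i)) (s : Fin (dv j)),
        ((r : ℕ) = 0 ∧ (s : ℕ) = dv j - 2 → blk dv i j X r s = 1) ∧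
        ((r : ℕ) = 1 ∧ (s : ℕ) = dv j - 1 → blk dv i j X r s = 1) ∧
        (¬((r : ℕ) = 0 ∧ (s : ℕ) = dv j - 2) ∧ ¬((r : ℕ) = 1 ∧ (s : ℕ) = dv j - 1) ∧
            ¬((r : ℕ) = 0 ∧ (s : ℕ) = dv j - 1) →
          blk dv i j X r s = 0) := by
  have hb1lt := b1.isLt
  have hb2lt := b2.isLt
  have ha1lt := a1.isLt
  have ha2lt := a2.isLt
  set M1 : ℕ := (a1 : ℕ) + (dv j - 1 - (b1 : ℕ)) with hM1
  set M2 : ℕ := (a2 : ℕ) + (dv j - 1 - (b2 : ℕ)) with hM2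
  have hentry : ∀ (l : ℕ) (r : Fin (dv i)) (s : Fin (dv j)),
      blk dv i j ((fun Y => ⁅Dmat dv (0:F) 0, Y⁆)^[l] X0) r s
        = Tform (termMat w1 x1) l (r : ℕ) (s : ℕ) + Tform (termMat w2 x2) l (r : ℕ) (s : ℕ) := by
    intro l r s
    rw [blk_iter, Tm_iter_entry]
    exact Tform_add (fun a b => hdec a b) l _ _
  have hM12 : M1 = M2 := by
    by_contra hMne
    rcases Nat.lt_or_ge M1 M2 with hlt | hge
    · obtain ⟨X, hXm, c, hc0, hXb⟩ := cornerize A hX0 w2 x2 a2 b2 hw2 hw2m hx2 hx2m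
        (termMat w1 x1)
        (fun a b => by
          rw [hdec a b]
          show w1 a * x1 b + w2 a * x2 b = w2 a * x2 b + w1 a * x1 b
          ring)
        (fun r s => term_vanish w1 x1 a1 b1 hw1m hx1m M2 r s (by omega))
      exact hcorner X hXm c hc0 hXb
    · have hlt : M2 < M1 := by omega
      obtain ⟨X, hXm, c, hc0, hXb⟩ := cornerize A hX0 w1 x1 a1 b1 hw1 hw1m hx1 hx1m
        (termMat w2 x2) (fun a b => hdec a b)
        (fun r s => term_vanish w2 x2 a2 b2 hw2m hx2m M1 r s (by omega))
      exact hcorner X hXm c hc0 hXb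
  set M : ℕ := M1 with hMdef
  have hq2 : 2 ≤ dv j := by omega
  have hp2 : 2 ≤ dv i := by omega
  have hMge : 1 ≤ M := by omega
  have ha1M : (a1 : ℕ) ≤ M := by omega
  have ha2M : (a2 : ℕ) ≤ M := by omega
  set P1 : F := w1 a1 * x1 b1 with hP1
  set P2 : F := w2 a2 * x2 b2 with hP2
  have hP1ne : P1 ≠ 0 := mul_ne_zero hw1 hx1
  have hP2ne : P2 ≠ 0 := mul_ne_zero hw2 hx2
  have hsgnA : ∀ n : ℕ, (-1:F)^((M-1) + n) = -(-1:F)^(M + n) := by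
    intro n
    have he : M + n = ((M-1) + n) + 1 := by omega
    rw [he, pow_succ]; ring
  have hsgnB : ∀ n : ℕ, 1 ≤ n → (-1:F)^((M-1) + (n-1)) = (-1:F)^(M + n) := by
    intro n hn
    have he : M + n = ((M-1) + (n-1)) + 2 := by omega
    rw [he, pow_add]; ring
  set D1 : F := (-1:F)^(M + (a1:ℕ)) * ((M.choose (a1:ℕ) : ℕ) : F) * P1 with hD1
  set D2 : F := (-1:F)^(M + (a2:ℕ)) * ((M.choose (a2:ℕ) : ℕ) : F) * P2 with hD2
  set A1 : F := (-1:F)^((M-1) + (a1:ℕ)) * (((M-1).choose (a1:ℕ) : ℕ) : F) * P1 with hA1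
  set A2 : F := (-1:F)^((M-1) + (a2:ℕ)) * (((M-1).choose (a2:ℕ) : ℕ) : F) * P2 with hA2
  set B1 : F := if 1 ≤ (a1:ℕ) then
    (-1:F)^((M-1) + ((a1:ℕ)-1)) * (((M-1).choose ((a1:ℕ)-1) : ℕ) : F) * P1 else 0 with hB1
  set B2v : F := if 1 ≤ (a2:ℕ) then
    (-1:F)^((M-1) + ((a2:ℕ)-1)) * (((M-1).choose ((a2:ℕ)-1) : ℕ) : F) * P2 else 0 with hB2v
  have hδ0 : D1 + D2 = 0 := by
    by_contra hδ
    refine hcorner ((fun Y => ⁅Dmat dv (0:F) 0, Y⁆)^[M] X0) (iter_mem A hX0 M) (D1 + D2) hδ ?_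
    intro r s
    rw [hentry M r s]
    by_cases hc : (r : ℕ) = 0 ∧ (s : ℕ) = dv j - 1
    · rw [if_pos hc, term_value w1 x1 a1 b1 hw1m hx1m M r s (by omega) (by omega),
        term_value w2 x2 a2 b2 hw2m hx2m M r s (by omega) (by omega), hc.1]
      simp only [Nat.sub_zero]
      rfl
    · rw [if_neg hc, term_vanish w1 x1 a1 b1 hw1m hx1m M r s (by omega),
        term_vanish w2 x2 a2 b2 hw2m hx2m M r s (by omega)]
      norm_num
  have hPas1 : B1 - A1 = D1 := by
    by_cases h1 : 1 ≤ (a1:ℕ)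
    · rw [hB1, if_pos h1, hA1, hD1, hsgnB _ h1, hsgnA,
        choose_pascal_cast M (a1:ℕ) hMge h1]
      ring
    · have ha10 : (a1:ℕ) = 0 := by omega
      rw [hB1, if_neg h1, hA1, hD1, ha10, hsgnA]
      simp only [Nat.choose_zero_right, Nat.cast_one, mul_one]
      ring
  have hPas2 : B2v - A2 = D2 := by
    by_cases h1 : 1 ≤ (a2:ℕ)
    · rw [hB2v, if_pos h1, hA2, hD2, hsgnB _ h1, hsgnA,
        choose_pascal_cast M (a2:ℕ) hMge h1]
      ring
    · have ha20 : (a2:ℕ) = 0 := by omega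
      rw [hB2v, if_neg h1, hA2, hD2, ha20, hsgnA]
      simp only [Nat.choose_zero_right, Nat.cast_one, mul_one]
      ring
  have hβα : B1 + B2v = A1 + A2 := by linear_combination hPas1 + hPas2 + hδ0
  have hα : A1 + A2 ≠ 0 := by
    intro hα0
    have hβ0 : B1 + B2v = 0 := by rw [hβα, hα0]
    by_cases hc1M : (a1:ℕ) = M
    · have hc10 : (M-1).choose (a1:ℕ) = 0 := Nat.choose_eq_zero_of_lt (by omega)
      rw [hA1, hA2, hc10] at hα0
      simp only [Nat.cast_zero, mul_zero, zero_mul, zero_add] at hα0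
      exact (mul_ne_zero (mul_ne_zero (pow_ne_zero _ (by norm_num))
        (by exact_mod_cast (Nat.choose_pos (by omega : (a2:ℕ) ≤ M - 1)).ne')) hP2ne) hα0
    · by_cases hc2M : (a2:ℕ) = M
      · have hc20 : (M-1).choose (a2:ℕ) = 0 := Nat.choose_eq_zero_of_lt (by omega)
        rw [hA1, hA2, hc20] at hα0
        simp only [Nat.cast_zero, mul_zero, zero_mul, add_zero] at hα0
        exact (mul_ne_zero (mul_ne_zero (pow_ne_zero _ (by norm_num))
          (by exact_mod_cast (Nat.choose_pos (by omega : (a1:ℕ) ≤ M - 1)).ne')) hP1ne) hα0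
      · by_cases hc10 : (a1:ℕ) = 0
        · rw [hB1, if_neg (by omega), hB2v, if_pos (by omega)] at hβ0
          simp only [zero_add] at hβ0
          exact (mul_ne_zero (mul_ne_zero (pow_ne_zero _ (by norm_num))
            (by exact_mod_cast (Nat.choose_pos (by omega : (a2:ℕ) - 1 ≤ M - 1)).ne')) hP2ne) hβ0
        · by_cases hc20 : (a2:ℕ) = 0
          · rw [hB1, if_pos (by omega), hB2v, if_neg (by omega)] at hβ0
            simp only [add_zero] at hβ0
            exact (mul_ne_zero (mul_ne_zero (pow_ne_zero _ (by norm_num))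
              (by exact_mod_cast (Nat.choose_pos (by omega : (a1:ℕ) - 1 ≤ M - 1)).ne')) hP1ne) hβ0
          · -- main case : 1 ≤ a1, a2 ≤ M - 1
            set C1 : ℕ := (M-1).choose (a1:ℕ) with hC1
            set C2 : ℕ := (M-1).choose (a2:ℕ) with hC2
            set C1' : ℕ := (M-1).choose ((a1:ℕ)-1) with hC1'
            set C2' : ℕ := (M-1).choose ((a2:ℕ)-1) with hC2'
            rw [hA1, hA2, hsgnA, hsgnA] at hα0
            have heq1 : (-1:F)^(M+(a1:ℕ)) * P1 * (C1 : F)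
                + (-1:F)^(M+(a2:ℕ)) * P2 * (C2 : F) = 0 := by
              linear_combination -hα0
            rw [hB1, if_pos (by omega), hB2v, if_pos (by omega),
              hsgnB _ (by omega), hsgnB _ (by omega)] at hβ0
            have heq2 : (-1:F)^(M+(a1:ℕ)) * P1 * (C1' : F)
                + (-1:F)^(M+(a2:ℕ)) * P2 * (C2' : F) = 0 := by
              linear_combination hβ0
            have he1ne : (-1:F)^(M+(a1:ℕ)) * P1 ≠ 0 :=
              mul_ne_zero (pow_ne_zero _ (by norm_num)) hP1ne
            have hCC : (C1 : F) * (C2' : F) = (C1' : F) * (C2 : F) := by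
              have h0 : (-1:F)^(M+(a1:ℕ)) * P1 * ((C1:F) * (C2':F) - (C1':F) * (C2:F)) = 0 := by
                linear_combination (C2' : F) * heq1 - (C2 : F) * heq2
              rcases mul_eq_zero.mp h0 with h' | h'
              · exact absurd h' he1ne
              · exact sub_eq_zero.mp h'
            -- choose recurrences
            have hr1 : C1 * (a1:ℕ) = C1' * (M - (a1:ℕ)) := by
              have h := Nat.choose_succ_right_eq (M-1) ((a1:ℕ)-1)
              rw [show (a1:ℕ)-1+1 = (a1:ℕ) from by omega,
                show M-1 - ((a1:ℕ)-1) = M - (a1:ℕ) from by omega] at h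
              exact h
            have hr2 : C2 * (a2:ℕ) = C2' * (M - (a2:ℕ)) := by
              have h := Nat.choose_succ_right_eq (M-1) ((a2:ℕ)-1)
              rw [show (a2:ℕ)-1+1 = (a2:ℕ) from by omega,
                show M-1 - ((a2:ℕ)-1) = M - (a2:ℕ) from by omega] at h
              exact h
            have hr1F : (C1:F) * ((a1:ℕ):F) = (C1':F) * ((M:F) - ((a1:ℕ):F)) := by
              have h' := congrArg (fun n : ℕ => (n : F)) hr1
              simp only [Nat.cast_mul] at h'
              rw [Nat.cast_sub ha1M] at h'
              exact h'
            have hr2F : (C2:F) * ((a2:ℕ):F) = (C2':F) * ((M:F) - ((a2:ℕ):F)) := by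
              have h' := congrArg (fun n : ℕ => (n : F)) hr2
              simp only [Nat.cast_mul] at h'
              rw [Nat.cast_sub ha2M] at h'
              exact h'
            have hC1'ne : (C1' : F) ≠ 0 := by
              exact_mod_cast (Nat.choose_pos (by omega : (a1:ℕ) - 1 ≤ M - 1)).ne'
            have hC2'ne : (C2' : F) ≠ 0 := by
              exact_mod_cast (Nat.choose_pos (by omega : (a2:ℕ) - 1 ≤ M - 1)).ne'
            have hkeyF : (C1':F) * (C2':F) * ((M:F) * (((a2:ℕ):F) - ((a1:ℕ):F))) = 0 := by
              linear_combination (((a1:ℕ):F) * ((a2:ℕ):F)) * hCC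
                - ((C2':F) * ((a2:ℕ):F)) * hr1F + ((C1':F) * ((a1:ℕ):F)) * hr2F
            have hMne : (M:F) ≠ 0 := Nat.cast_ne_zero.mpr (by omega)
            have haF : ((a2:ℕ):F) - ((a1:ℕ):F) ≠ 0 := by
              refine sub_ne_zero.mpr ?_
              intro hc
              exact hane (by exact_mod_cast hc.symm)
            exact (mul_ne_zero (mul_ne_zero hC1'ne hC2'ne) (mul_ne_zero hMne haF)) hkeyF
  refine ⟨(A1 + A2)⁻¹ • ((fun Y => ⁅Dmat dv (0:F) 0, Y⁆)^[M-1] X0),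
    (hAlg F dv 0 0 A).smul_mem _ (iter_mem A hX0 (M-1)), ?_⟩
  intro r s
  have hsm : blk dv i j ((A1 + A2)⁻¹ • ((fun Y => ⁅Dmat dv (0:F) 0, Y⁆)^[M-1] X0)) r s
      = (A1 + A2)⁻¹ * blk dv i j ((fun Y => ⁅Dmat dv (0:F) 0, Y⁆)^[M-1] X0) r s := rfl
  refine ⟨?_, ?_, ?_⟩
  · rintro ⟨hr0, hsq⟩
    have hval : blk dv i j ((fun Y => ⁅Dmat dv (0:F) 0, Y⁆)^[M-1] X0) r s = A1 + A2 := by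
      rw [hentry (M-1) r s,
        term_value w1 x1 a1 b1 hw1m hx1m (M-1) r s (by omega) (by omega),
        term_value w2 x2 a2 b2 hw2m hx2m (M-1) r s (by omega) (by omega), hr0]
      simp only [Nat.sub_zero]
      rfl
    rw [hsm, hval]
    exact inv_mul_cancel₀ hα
  · rintro ⟨hr1, hsq⟩
    have hval1 : Tform (termMat w1 x1) (M-1) (r : ℕ) (s : ℕ) = B1 := by
      by_cases h1 : 1 ≤ (a1:ℕ)
      · rw [term_value w1 x1 a1 b1 hw1m hx1m (M-1) r s (by omega) (by omega), hr1,
          hB1, if_pos h1, hP1]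
      · rw [term_value_high w1 x1 a1 hw1m (M-1) r s (by omega), hB1, if_neg h1]
    have hval2 : Tform (termMat w2 x2) (M-1) (r : ℕ) (s : ℕ) = B2v := by
      by_cases h1 : 1 ≤ (a2:ℕ)
      · rw [term_value w2 x2 a2 b2 hw2m hx2m (M-1) r s (by omega) (by omega), hr1,
          hB2v, if_pos h1, hP2]
      · rw [term_value_high w2 x2 a2 hw2m (M-1) r s (by omega), hB2v, if_neg h1]
    rw [hsm, hentry (M-1) r s, hval1, hval2, hβα]
    exact inv_mul_cancel₀ hα
  · rintro ⟨h1, h2, h3⟩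
    have hslt := s.isLt
    rw [hsm, hentry (M-1) r s,
      term_vanish w1 x1 a1 b1 hw1m hx1m (M-1) r s (by omega),
      term_vanish w2 x2 a2 b2 hw2m hx2m (M-1) r s (by omega)]
    norm_num

end Main


/-- Proposition `prop.dominante`:  if `r_{i,j} = 1` there is `X ∈ h(0,0,C)`
whose `(i,j)`-block has a `1` in the upper-right corner (entry `(1,d_j)`, 0-indexed
`(0, d_j−1)`) and zeros elsewhere; if `r_{i,j} = 2` there is `X ∈ h(0,0,C)` whose
`(i,j)`-block has `1`s in positions `(1,d_j−1)` and `(2,d_j)` and zeros elsewhere, except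
possibly at position `(1,d_j)`. -/
theorem statement7 {F : Type*} [Field F] [CharZero F] {k : ℕ} (hk : 2 ≤ k)
    (dv : Fin k → ℕ) (hdv : ∀ i, 0 < dv i) (i j : Fin k) (hij : i < j) :
    (rr F dv i j = 1 →
      ∃ X ∈ hAlg F dv 0 0 (CanE F dv), ∀ (r : Fin (dv i)) (s : Fin (dv j)),
        blk dv i j X r s = if (r : ℕ) = 0 ∧ (s : ℕ) = dv j - 1 then 1 else 0) ∧
    (rr F dv i j = 2 →
      ∃ X ∈ hAlg F dv 0 0 (CanE F dv), ∀ (r : Fin (dv i)) (s : Fin (dv j)),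
        ((r : ℕ) = 0 ∧ (s : ℕ) = dv j - 2 → blk dv i j X r s = 1) ∧
        ((r : ℕ) = 1 ∧ (s : ℕ) = dv j - 1 → blk dv i j X r s = 1) ∧
        (¬((r : ℕ) = 0 ∧ (s : ℕ) = dv j - 2) ∧ ¬((r : ℕ) = 1 ∧ (s : ℕ) = dv j - 1) ∧
            ¬((r : ℕ) = 0 ∧ (s : ℕ) = dv j - 1) →
          blk dv i j X r s = 0)) := by
  have hp1 : 0 < dv i := hdv i
  have hq1 : 0 < dv j := hdv j
  constructor
  · -- rank 1 case
    intro hr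
    have hg : ¬ ∀ X ∈ hAlg F dv 0 0 (CanE F dv), blk dv i j X = 0 := by
      intro hg
      unfold rr at hr
      rw [if_pos hg] at hr
      omega
    have hinf : sInf {n | ∃ X ∈ hAlg F dv 0 0 (CanE F dv),
        blk dv i j X ≠ 0 ∧ (blk dv i j X).rank = n} = 1 := by
      unfold rr at hr
      rwa [if_neg hg] at hr
    have hSne : {n | ∃ X ∈ hAlg F dv 0 0 (CanE F dv),
        blk dv i j X ≠ 0 ∧ (blk dv i j X).rank = n}.Nonempty := by
      push_neg at hg
      obtain ⟨X, hX, hne⟩ := hg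
      exact ⟨(blk dv i j X).rank, X, hX, hne, rfl⟩
    have h1S := Nat.sInf_mem hSne
    rw [hinf] at h1S
    obtain ⟨X0, hX0, hbne, hrk⟩ := h1S
    obtain ⟨u, v, hd⟩ := rank_decomp (blk dv i j X0) hrk
    have hd1 : ∀ a b, blk dv i j X0 a b = u 0 a * v 0 b := by
      intro a b
      rw [hd a b, Fin.sum_univ_one]
    have hex : ∃ a b, u 0 a * v 0 b ≠ 0 := by
      by_contra hcon
      push_neg at hcon
      refine hbne (Matrix.ext fun a b => ?_)
      rw [Matrix.zero_apply, hd1 a b]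
      exact hcon a b
    obtain ⟨aw, bw, hab⟩ := hex
    have hwne : u 0 ≠ 0 := fun h => hab (by rw [h]; simp)
    have hxne : v 0 ≠ 0 := fun h => hab (by rw [h]; simp)
    obtain ⟨a0, ha0, hamax⟩ := exists_max_supp (u 0) hwne
    obtain ⟨b0, hb0, hbmin⟩ := exists_min_supp (v 0) hxne
    obtain ⟨X, hXm, c, hc0, hXb⟩ := cornerize (CanE F dv) hX0 (u 0) (v 0) a0 b0 ha0 hamax hb0 hbmin
      0 (fun a b => by rw [hd1 a b]; simp) (fun r s => Tform_zeroM _ _ _)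
    refine ⟨c⁻¹ • X, (hAlg F dv 0 0 (CanE F dv)).smul_mem _ hXm, ?_⟩
    intro r s
    have hsm : blk dv i j (c⁻¹ • X) r s = c⁻¹ * blk dv i j X r s := rfl
    rw [hsm, hXb r s]
    split_ifs
    · exact inv_mul_cancel₀ hc0
    · exact mul_zero _
  · -- rank 2 case
    intro hr
    have hg : ¬ ∀ X ∈ hAlg F dv 0 0 (CanE F dv), blk dv i j X = 0 := by
      intro hg
      unfold rr at hr
      rw [if_pos hg] at hr
      omega
    have hinf : sInf {n | ∃ X ∈ hAlg F dv 0 0 (CanE F dv),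
        blk dv i j X ≠ 0 ∧ (blk dv i j X).rank = n} = 2 := by
      unfold rr at hr
      rwa [if_neg hg] at hr
    have hSne : {n | ∃ X ∈ hAlg F dv 0 0 (CanE F dv),
        blk dv i j X ≠ 0 ∧ (blk dv i j X).rank = n}.Nonempty := by
      push_neg at hg
      obtain ⟨X, hX, hne⟩ := hg
      exact ⟨(blk dv i j X).rank, X, hX, hne, rfl⟩
    have h2S := Nat.sInf_mem hSne
    rw [hinf] at h2S
    obtain ⟨X0, hX0, hbne, hrk⟩ := h2S
    have hcorner : ∀ X ∈ hAlg F dv 0 0 (CanE F dv), ∀ c : F, c ≠ 0 →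
        ¬(∀ r s, blk dv i j X r s = if (r : ℕ) = 0 ∧ (s : ℕ) = dv j - 1 then c else 0) := by
      intro X hX c hc hall
      have hMeq : blk dv i j X = Matrix.of (fun (r : Fin (dv i)) (s : Fin (dv j)) =>
          if (r : ℕ) = 0 ∧ (s : ℕ) = dv j - 1 then c else 0) :=
        Matrix.ext fun r s => hall r s
      have hne : blk dv i j X ≠ 0 := by
        intro h0
        have h1 := hall ⟨0, hp1⟩ ⟨dv j - 1, by omega⟩
        rw [h0] at h1
        simp only [Matrix.zero_apply] at h1
        rw [if_pos (⟨trivial, trivial⟩ : True ∧ True)] at h1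
        exact hc h1.symm
      have hmem : (blk dv i j X).rank ∈ {n | ∃ X ∈ hAlg F dv 0 0 (CanE F dv),
          blk dv i j X ≠ 0 ∧ (blk dv i j X).rank = n} := ⟨X, hX, hne, rfl⟩
      have hge2 := Nat.sInf_le hmem
      rw [hinf] at hge2
      have hle1 : (blk dv i j X).rank ≤ 1 := by
        rw [hMeq]
        exact rank_single_le 0 (dv j - 1) c
      omega
    obtain ⟨u, v, hd⟩ := rank_decomp (blk dv i j X0) hrk
    have hd2 : ∀ a b, blk dv i j X0 a b = u 0 a * v 0 b + u 1 a * v 1 b := by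
      intro a b
      rw [hd a b, Fin.sum_univ_two]
    have hsingle : ∀ (w : Fin (dv i) → F) (x : Fin (dv j) → F),
        (∀ a b, blk dv i j X0 a b = w a * x b) → False := by
      intro w x hwx
      have hex : ∃ a b, w a * x b ≠ 0 := by
        by_contra hcon
        push_neg at hcon
        refine hbne (Matrix.ext fun a b => ?_)
        rw [Matrix.zero_apply, hwx a b]
        exact hcon a b
      obtain ⟨aw, bw, hab⟩ := hex
      have hwne : w ≠ 0 := fun h => hab (by rw [h]; simp)
      have hxne : x ≠ 0 := fun h => hab (by rw [h]; simp)
      obtain ⟨a0, ha0, hamax⟩ := exists_max_supp w hwne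
      obtain ⟨b0, hb0, hbmin⟩ := exists_min_supp x hxne
      obtain ⟨X, hXm, c, hc0, hXb⟩ := cornerize (CanE F dv) hX0 w x a0 b0 ha0 hamax hb0 hbmin
        0 (fun a b => by rw [hwx a b]; simp) (fun r s => Tform_zeroM _ _ _)
      exact hcorner X hXm c hc0 hXb
    by_cases hu0 : u 0 = 0
    · exact (hsingle (u 1) (v 1) (fun a b => by rw [hd2 a b, hu0]; simp)).elim
    by_cases hv0 : v 0 = 0
    · exact (hsingle (u 1) (v 1) (fun a b => by rw [hd2 a b, hv0]; simp)).elim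
    by_cases hu1 : u 1 = 0
    · exact (hsingle (u 0) (v 0) (fun a b => by rw [hd2 a b, hu1]; simp)).elim
    by_cases hv1 : v 1 = 0
    · exact (hsingle (u 0) (v 0) (fun a b => by rw [hd2 a b, hv1]; simp)).elim
    obtain ⟨a1, ha1, ha1m⟩ := exists_max_supp (u 0) hu0
    obtain ⟨b1, hb1, hb1m⟩ := exists_min_supp (v 0) hv0
    obtain ⟨a2, ha2, ha2m⟩ := exists_max_supp (u 1) hu1
    obtain ⟨b2, hb2, hb2m⟩ := exists_min_supp (v 1) hv1
    by_cases haa : (a1 : ℕ) = (a2 : ℕ)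
    · have hu1a1 : u 1 a1 ≠ 0 := by
        have he : a1 = a2 := Fin.ext haa
        rw [he]
        exact ha2
      set c0 : F := u 0 a1 / u 1 a1 with hc0def
      set w1' : Fin (dv i) → F := fun t => u 0 t - c0 * u 1 t with hw1'
      set x2' : Fin (dv j) → F := fun t => v 1 t + c0 * v 0 t with hx2'
      have hdec' : ∀ a b, blk dv i j X0 a b = w1' a * v 0 b + u 1 a * x2' b := by
        intro a b
        rw [hd2 a b]
        simp only [hw1', hx2']
        ring
      by_cases hw1'0 : w1' = 0
      · exact (hsingle (u 1) x2' (fun a b => by rw [hdec' a b, hw1'0]; simp)).elim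
      by_cases hx2'0 : x2' = 0
      · exact (hsingle w1' (v 0) (fun a b => by rw [hdec' a b, hx2'0]; simp)).elim
      obtain ⟨a1', ha1', ha1'm⟩ := exists_max_supp w1' hw1'0
      obtain ⟨b2', hb2', hb2'm⟩ := exists_min_supp x2' hx2'0
      have hw1'a1 : w1' a1 = 0 := by
        simp only [hw1', hc0def]
        field_simp
        ring
      have ha1'lt : (a1' : ℕ) < (a1 : ℕ) := by
        rcases Nat.lt_or_ge (a1' : ℕ) (a1 : ℕ) with h | h
        · exact h
        · exfalso
          rcases Nat.eq_or_lt_of_le h with heq | hlt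
          · exact ha1' (by rw [show a1' = a1 from Fin.ext heq.symm]; exact hw1'a1)
          · have h1 : u 0 a1' = 0 := ha1m a1' (by rw [Fin.lt_def]; omega)
            have h2 : u 1 a1' = 0 := ha2m a1' (by rw [Fin.lt_def]; omega)
            exact ha1' (by simp only [hw1']; rw [h1, h2]; ring)
      exact twoterm (CanE F dv) hX0 w1' (v 0) (u 1) x2' a1' a2 b1 b2'
        ha1' ha1'm hb1 hb1m ha2 ha2m hb2' hb2'm (by omega) hdec' hcorner
    · exact twoterm (CanE F dv) hX0 (u 0) (v 0) (u 1) (v 1) a1 a2 b1 b2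
        ha1 ha1m hb1 hb1m ha2 ha2m hb2 hb2m haa hd2 hcorner

end Paper
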